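/- Let X be a complex Banach space, let P be an L-projection on X** with range i_X(X), and let Y be a closed subspace of X with closed unit ball B_Y. Then P maps Y^{⊥⊥} onto i_X(Y) if and only if P maps the weak-star closure of i_X(B_Y) in X** onto i_X(B_Y). -/

import Mathlib

open NormedSpace

noncomputable section

set_option maxHeartbeats 1000000

/-- The transpose (dual map) of a continuous linear map between (semi)normed spaces:
`ctranspose f` sends a functional `g` to `g ∘ f`. -/
def ctranspose {E F : Type*} [SeminormedAddCommGroup E] [NormedSpace ℂ E]
    [SeminormedAddCommGroup F] [NormedSpace ℂ F] (f : E →L[ℂ] F) :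
    StrongDual ℂ F →L[ℂ] StrongDual ℂ E :=
  (ContinuousLinearMap.compL ℂ E F ℂ).flip f

/-- A bounded linear projection `P` is an L-projection if `‖z‖ = ‖P z‖ + ‖z - P z‖`
for all `z`. -/
def IsLProjection {Z : Type*} [SeminormedAddCommGroup Z] [NormedSpace ℂ Z]
    (P : Z →L[ℂ] Z) : Prop :=
  (∀ z, P (P z) = P z) ∧ ∀ z, ‖z‖ = ‖P z‖ + ‖z - P z‖

section EvalRep

variable {F : Type*} [NormedAddCommGroup F] [NormedSpace ℂ F]

/-- Evaluation at a point, as a linear map from `F` to linear functionals on `WeakDual ℂ F`. -/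
def evalWD (F : Type*) [NormedAddCommGroup F] [NormedSpace ℂ F] :
    F →ₗ[ℂ] (WeakDual ℂ F →ₗ[ℂ] ℂ) where
  toFun g :=
    { toFun := fun Φ => Φ g
      map_add' := fun Φ Φ' => rfl
      map_smul' := fun c Φ => rfl }
  map_add' g g' := by ext Φ; exact map_add Φ g g'
  map_smul' c g := by ext Φ; exact map_smul Φ c g

lemma exists_eval (f : WeakDual ℂ F →L[ℂ] ℂ) : ∃ g : F, ∀ Φ : WeakDual ℂ F, f Φ = Φ g := by
  have hb := LinearMap.hasBasis_weakBilin (topDualPairing ℂ F)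
  have h0 : f ⁻¹' Metric.ball 0 1 ∈ nhds (0 : WeakDual ℂ F) := by
    have := f.continuous.continuousAt (x := 0)
    apply this.preimage_mem_nhds
    rw [map_zero]
    exact Metric.ball_mem_nhds 0 one_pos
  replace h0 := hb.mem_iff.mp h0
  obtain ⟨U, hU, hsub⟩ := h0
  obtain ⟨s, r, hr, rfl⟩ := (SeminormFamily.basisSets_iff _).mp hU
  have key : ∀ Φ : WeakDual ℂ F, (∀ g ∈ s, Φ g = 0) → f Φ = 0 := by
    intro Φ hΦ
    by_contra hne
    set c : ℂ := ((2 / ‖f Φ‖ : ℝ) : ℂ) with hc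
    have hmem : (c • Φ) ∈ Seminorm.ball
        (s.sup ((topDualPairing ℂ F).toSeminormFamily)) 0 r := by
      refine (Seminorm.mem_ball_zero (p := s.sup ((topDualPairing ℂ F).toSeminormFamily)) (y := (c • Φ : F →L[ℂ] ℂ)) (r := r)).mpr ?_
      apply Seminorm.finset_sup_apply_lt hr
      intro g hg
      show ‖c • Φ g‖ < r
      rw [hΦ g hg, smul_zero, norm_zero]
      exact hr
    have h1 : ‖f (c • Φ)‖ < 1 := by
      have := hsub hmem
      exact mem_ball_zero_iff.mp this
    have h2 : ‖f (c • Φ)‖ = 2 := by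
      rw [map_smul, norm_smul, hc]
      have hfne : ‖f Φ‖ ≠ 0 := norm_ne_zero_iff.mpr hne
      rw [Complex.norm_real, Real.norm_eq_abs, abs_of_pos (by positivity)]
      exact div_mul_cancel₀ 2 hfne
    rw [h2] at h1; norm_num at h1
  have hker : ⨅ g : s, LinearMap.ker (evalWD F (g : F)) ≤
      LinearMap.ker (f : WeakDual ℂ F →ₗ[ℂ] ℂ) := by
    intro Φ hΦ
    simp only [Submodule.mem_iInf, LinearMap.mem_ker] at hΦ ⊢
    exact key Φ (fun g hg => hΦ ⟨g, hg⟩)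
  have hspan := mem_span_of_iInf_ker_le_ker hker
  have hmem : (f : WeakDual ℂ F →ₗ[ℂ] ℂ) ∈ LinearMap.range (evalWD F) := by
    refine Submodule.span_le.2 ?_ hspan
    rintro _ ⟨g, rfl⟩
    exact ⟨g, rfl⟩
  obtain ⟨g, hg⟩ := hmem
  exact ⟨g, fun Φ => by rw [← ContinuousLinearMap.coe_coe f, ← hg]; rfl⟩

end EvalRep

section Gold

variable {X : Type*} [NormedAddCommGroup X] [NormedSpace ℂ X]

lemma goldstine (Y : Subspace ℂ X) (Ψ : StrongDual ℂ (StrongDual ℂ X))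
    (hker : ∀ f : StrongDual ℂ X, (∀ y ∈ Y, f y = 0) → Ψ f = 0) (hn : ‖Ψ‖ ≤ 1) :
    StrongDual.toWeakDual Ψ ∈ closure (StrongDual.toWeakDual '' (inclusionInDoubleDual ℂ X ''
      {x : X | x ∈ Y ∧ ‖x‖ ≤ 1})) := by
  by_contra hc
  set i := inclusionInDoubleDual ℂ X with hidef
  set B : Set X := {x : X | x ∈ Y ∧ ‖x‖ ≤ 1} with hBdef
  set m : X → WeakDual ℂ (StrongDual ℂ X) := fun x => StrongDual.toWeakDual (i x) with hmdef
  have hS : StrongDual.toWeakDual '' (i '' B) = m '' B := by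
    rw [Set.image_image]
  rw [hS] at hc
  set S : Set (WeakDual ℂ (StrongDual ℂ X)) := m '' B with hSdef
  have hBconv : Convex ℝ B := by
    intro x hx y hy a b ha hb hab
    constructor
    · exact Y.add_mem (Y.smul_mem (a : ℂ) hx.1) (Y.smul_mem (b : ℂ) hy.1)
    · calc ‖a • x + b • y‖ ≤ ‖a • x‖ + ‖b • y‖ := norm_add_le _ _
        _ = a * ‖x‖ + b * ‖y‖ := by
            rw [norm_smul, norm_smul, Real.norm_eq_abs, Real.norm_eq_abs,
              abs_of_nonneg ha, abs_of_nonneg hb]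
        _ ≤ a * 1 + b * 1 := by
            gcongr
            exacts [hx.2, hy.2]
        _ = 1 := by rw [mul_one, mul_one, hab]
  have hmlin : IsLinearMap ℝ m := by
    constructor
    · intro x y
      simp only [hmdef, map_add]
    · intro r x
      show StrongDual.toWeakDual (i (r • x)) = r • StrongDual.toWeakDual (i x)
      rw [i.map_smul_of_tower r x]
      rfl
  have hSconv : Convex ℝ (closure S) := by
    intro x hx y hy a b ha hb hab
    have hS0 := hBconv.is_linear_image hmlin
    exact map_mem_closure₂ (f := fun p q : WeakDual ℂ (StrongDual ℂ X) => a • p + b • q)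
      (by fun_prop) hx hy
      (fun p hp q hq => hS0 hp hq ha hb hab)
  haveI : LocallyConvexSpace ℝ (WeakDual ℂ (StrongDual ℂ X)) :=
    @WeakBilin.locallyConvexSpace ℂ (StrongDual ℂ (StrongDual ℂ X)) (StrongDual ℂ X) _
      ContinuousLinearMap.addCommGroup _ ContinuousLinearMap.addCommGroup _ _ _ _
      (topDualPairing ℂ (StrongDual ℂ X))
  haveI : IsScalarTower ℝ ℂ (WeakDual ℂ (StrongDual ℂ X)) :=
    ⟨fun r c x => ContinuousLinearMap.ext fun f => smul_assoc r c (x f)⟩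
  obtain ⟨f, u, hfx, hfb⟩ := RCLike.geometric_hahn_banach_point_closed (𝕜 := ℂ)
    hSconv isClosed_closure hc
  obtain ⟨g, hg⟩ := exists_eval f
  have hfm : ∀ x : X, f (m x) = g x := by
    intro x
    rw [hg (m x)]
    rfl
  have hBval : ∀ x ∈ B, u < RCLike.re (g x) := by
    intro x hx
    have := hfb (m x) (subset_closure (Set.mem_image_of_mem m hx))
    rwa [hfm x] at this
  have hu0 : u < 0 := by
    have := hBval 0 ⟨Y.zero_mem, by simp⟩
    simpa using this
  have hbound : ∀ x ∈ B, ‖g x‖ ≤ -u := by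
    intro x hx
    by_cases ht : g x = 0
    · rw [ht, norm_zero]; linarith
    · set t : ℂ := g x with htdef
      have htne : (‖t‖ : ℂ) ≠ 0 := by
        simpa using norm_ne_zero_iff.mpr ht
      set c : ℂ := -(starRingEnd ℂ t) / (‖t‖ : ℂ) with hcdef
      have hcnorm : ‖c‖ = 1 := by
        rw [hcdef, norm_div, norm_neg, RCLike.norm_conj, Complex.norm_real, Real.norm_eq_abs,
          abs_of_pos (norm_pos_iff.mpr ht), div_self (norm_ne_zero_iff.mpr ht)]
      have hcx : c • x ∈ B := by
        refine ⟨Y.smul_mem c hx.1, ?_⟩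
        rw [norm_smul, hcnorm, one_mul]
        exact hx.2
      have hval := hBval (c • x) hcx
      rw [map_smul, smul_eq_mul] at hval
      have hct : c * t = -(‖t‖ : ℂ) := by
        have h1 : t * (starRingEnd ℂ) t = ((‖t‖ : ℂ) * (‖t‖ : ℂ)) := by
          rw [Complex.mul_conj]
          norm_cast
          rw [Complex.normSq_eq_norm_sq, sq]
        have h2 : c * t = -(t * (starRingEnd ℂ) t) / (‖t‖ : ℂ) := by
          rw [hcdef]; ring
        rw [h2, h1, neg_div, mul_div_assoc, div_self htne, mul_one]
      rw [← htdef, hct] at hval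
      have : u < -‖t‖ := by simpa using hval
      linarith
  -- restriction of g to Y has norm at most -u
  set gY : Y →L[ℂ] ℂ := g.comp Y.subtypeL with hgYdef
  have hunonneg : (0:ℝ) ≤ -u := by linarith
  have hgYnorm : ‖gY‖ ≤ -u := by
    refine ContinuousLinearMap.opNorm_le_bound _ hunonneg ?_
    intro y
    show ‖g (y : X)‖ ≤ -u * ‖y‖
    by_cases hy0 : (y : X) = 0
    · simp only [hy0, map_zero, norm_zero]
      positivity
    · have hny : (0:ℝ) < ‖(y : X)‖ := norm_pos_iff.mpr hy0
      have hz : (‖(y:X)‖⁻¹ : ℝ) • (y : X) ∈ B := by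
        constructor
        · exact (Y.restrictScalars ℝ).smul_mem _ y.2
        · rw [norm_smul, Real.norm_eq_abs, abs_of_pos (by positivity),
            inv_mul_cancel₀ hny.ne']
      have hb2 := hbound _ hz
      rw [g.map_smul_of_tower, norm_smul, Real.norm_eq_abs, abs_of_pos (by positivity)] at hb2
      have hnyY : ‖y‖ = ‖(y : X)‖ := rfl
      rw [hnyY]
      calc ‖g (y:X)‖ = ‖(y:X)‖ * (‖(y:X)‖⁻¹ * ‖g (y:X)‖) := by
            field_simp
        _ ≤ ‖(y:X)‖ * (-u) := by
            apply mul_le_mul_of_nonneg_left hb2 hny.le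
        _ = -u * ‖(y:X)‖ := mul_comm _ _
  obtain ⟨h, hext, hnorm⟩ := exists_extension_norm_eq Y gY
  have hΨgh : Ψ g = Ψ h := by
    have hz : Ψ (g - h) = 0 := by
      apply hker
      intro y hy
      have := hext ⟨y, hy⟩
      have hgYy : gY ⟨y, hy⟩ = g y := rfl
      rw [hgYy] at this
      rw [ContinuousLinearMap.sub_apply, this, sub_self]
    rw [map_sub, sub_eq_zero] at hz
    exact hz
  have hΨh : ‖Ψ h‖ ≤ -u := by
    calc ‖Ψ h‖ ≤ ‖Ψ‖ * ‖h‖ := Ψ.le_opNorm h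
      _ ≤ 1 * (-u) := by
          apply mul_le_mul hn (by rw [hnorm]; exact hgYnorm) (norm_nonneg _) zero_le_one
      _ = -u := one_mul _
  have hre : u ≤ (Ψ g).re := by
    have h1 : ‖Ψ g‖ ≤ -u := by rw [hΨgh]; exact hΨh
    have h2 : |(Ψ g).re| ≤ ‖Ψ g‖ := by
      exact Complex.abs_re_le_norm _
    have h3 := neg_abs_le ((Ψ g).re)
    linarith
  have hfΨ : f (StrongDual.toWeakDual Ψ) = Ψ g := hg _
  rw [hfΨ, RCLike.re_to_complex] at hfx
  linarith

end Gold

/-- Let `P` be an L-projection on `X**` with range `i_X(X)` and let `Y` be a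
closed subspace of `X`. Then `P` maps `Y^{⊥⊥}` onto `i_X(Y)` if and only if `P` maps the
weak-star closure of `i_X(B_Y)` in `X**` onto `i_X(B_Y)`, where `B_Y` is the closed unit ball
of `Y`. -/
theorem lprojection_maps_biannihilator_iff_maps_ball_closure
    (X : Type*) [NormedAddCommGroup X] [NormedSpace ℂ X] [CompleteSpace X]
    (P : StrongDual ℂ (StrongDual ℂ X) →L[ℂ] StrongDual ℂ (StrongDual ℂ X))
    (hP : IsLProjection (Z := StrongDual ℂ (StrongDual ℂ X)) P)
    (hrange : Set.range P = Set.range (inclusionInDoubleDual ℂ X))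
    (Y : Subspace ℂ X) (hY : IsClosed (Y : Set X)) :
    (P '' {Ψ : StrongDual ℂ (StrongDual ℂ X) | ∀ f : StrongDual ℂ X, (∀ y ∈ Y, f y = 0) → Ψ f = 0}
        = inclusionInDoubleDual ℂ X '' (Y : Set X)) ↔
      (P '' (StrongDual.toWeakDual ⁻¹' closure (StrongDual.toWeakDual ''
            (inclusionInDoubleDual ℂ X '' {x : X | x ∈ Y ∧ ‖x‖ ≤ 1})))
        = inclusionInDoubleDual ℂ X '' {x : X | x ∈ Y ∧ ‖x‖ ≤ 1}) := by
  have hnormi : ∀ x : X, ‖inclusionInDoubleDual ℂ X x‖ = ‖x‖ := fun x =>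
    (inclusionInDoubleDualLi ℂ (E := X)).norm_map x
  have hPfix : ∀ x : X, P (inclusionInDoubleDual ℂ X x) = inclusionInDoubleDual ℂ X x := by
    intro x
    have hx : inclusionInDoubleDual ℂ X x ∈ Set.range P := by
      rw [hrange]; exact Set.mem_range_self x
    obtain ⟨w, hw⟩ := hx
    rw [← hw]
    exact hP.1 w
  have hPnorm : ∀ z, ‖P z‖ ≤ ‖z‖ := by
    intro z
    rw [hP.2 z]
    exact le_add_of_nonneg_right (norm_nonneg (z - P z))
  have hCT : ∀ Ψ : StrongDual ℂ (StrongDual ℂ X), (StrongDual.toWeakDual Ψ ∈ closure (StrongDual.toWeakDual ''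
        (inclusionInDoubleDual ℂ X '' {x : X | x ∈ Y ∧ ‖x‖ ≤ 1}))) →
      ∀ f : StrongDual ℂ X, (∀ y ∈ Y, f y = 0) → Ψ f = 0 := by
    intro Ψ hΨ f hf
    have hclosed : IsClosed {Φ : WeakDual ℂ (StrongDual ℂ X) | Φ f = 0} :=
      isClosed_eq (WeakDual.eval_continuous f) continuous_const
    have hsub : (StrongDual.toWeakDual '' (inclusionInDoubleDual ℂ X ''
        {x : X | x ∈ Y ∧ ‖x‖ ≤ 1})) ⊆ {Φ : WeakDual ℂ (StrongDual ℂ X) | Φ f = 0} := by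
      rintro _ ⟨_, ⟨x, hx, rfl⟩, rfl⟩
      show inclusionInDoubleDual ℂ X x f = 0
      rw [dual_def]
      exact hf x hx.1
    exact closure_minimal hsub hclosed hΨ
  have hC1 : ∀ Ψ : StrongDual ℂ (StrongDual ℂ X), (StrongDual.toWeakDual Ψ ∈ closure (StrongDual.toWeakDual ''
        (inclusionInDoubleDual ℂ X '' {x : X | x ∈ Y ∧ ‖x‖ ≤ 1}))) → ‖Ψ‖ ≤ 1 := by
    intro Ψ hΨ
    refine ContinuousLinearMap.opNorm_le_bound Ψ zero_le_one ?_
    intro f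
    rw [one_mul]
    have hclosed : IsClosed {Φ : WeakDual ℂ (StrongDual ℂ X) | ‖Φ f‖ ≤ ‖f‖} :=
      isClosed_le ((WeakDual.eval_continuous f).norm) continuous_const
    have hsub : (StrongDual.toWeakDual '' (inclusionInDoubleDual ℂ X ''
        {x : X | x ∈ Y ∧ ‖x‖ ≤ 1})) ⊆ {Φ : WeakDual ℂ (StrongDual ℂ X) | ‖Φ f‖ ≤ ‖f‖} := by
      rintro _ ⟨_, ⟨x, hx, rfl⟩, rfl⟩
      show ‖inclusionInDoubleDual ℂ X x f‖ ≤ ‖f‖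
      rw [dual_def]
      calc ‖f x‖ ≤ ‖f‖ * ‖x‖ := f.le_opNorm x
        _ ≤ ‖f‖ * 1 := by gcongr; exact hx.2
        _ = ‖f‖ := mul_one _
    exact closure_minimal hsub hclosed hΨ
  constructor
  · intro hT
    apply Set.Subset.antisymm
    · rintro _ ⟨Ψ, hΨ, rfl⟩
      have hΨmem : StrongDual.toWeakDual Ψ ∈ closure (StrongDual.toWeakDual ''
          (inclusionInDoubleDual ℂ X '' {x : X | x ∈ Y ∧ ‖x‖ ≤ 1})) := hΨ
      have hT' : Ψ ∈ {Ψ : StrongDual ℂ (StrongDual ℂ X) |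
          ∀ f : StrongDual ℂ X, (∀ y ∈ Y, f y = 0) → Ψ f = 0} := hCT Ψ hΨmem
      have hPmem : P Ψ ∈ inclusionInDoubleDual ℂ X '' (Y : Set X) := by
        rw [← hT]; exact Set.mem_image_of_mem _ hT'
      obtain ⟨y, hy, hPy⟩ := hPmem
      refine ⟨y, ⟨hy, ?_⟩, hPy⟩
      have hle : ‖inclusionInDoubleDual ℂ X y‖ ≤ 1 := by
        rw [hPy]
        calc ‖P Ψ‖ ≤ ‖Ψ‖ := hPnorm Ψ
          _ ≤ 1 := hC1 Ψ hΨmem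
      rwa [hnormi y] at hle
    · rintro _ ⟨x, hx, rfl⟩
      exact ⟨inclusionInDoubleDual ℂ X x,
        Set.mem_preimage.mpr (subset_closure
          (Set.mem_image_of_mem _ (Set.mem_image_of_mem _ hx))), hPfix x⟩
  · intro hB
    apply Set.Subset.antisymm
    · rintro _ ⟨Ψ, hΨ, rfl⟩
      by_cases h0 : Ψ = 0
      · exact ⟨0, Y.zero_mem, by rw [map_zero, h0, map_zero]⟩
      · have hn0 : ‖Ψ‖ ≠ 0 := by
          intro hh
          apply h0
          ext f
          have h1 := Ψ.le_opNorm f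
          rw [hh, zero_mul] at h1
          have h2 : ‖Ψ f‖ = 0 := le_antisymm h1 (norm_nonneg _)
          simpa using h2
        have hne : ((‖Ψ‖ : ℝ) : ℂ) ≠ 0 := by
          simpa using hn0
        set Ψ' : StrongDual ℂ (StrongDual ℂ X) := ((‖Ψ‖ : ℝ) : ℂ)⁻¹ • Ψ with hΨ'def
        have hker' : ∀ f : StrongDual ℂ X, (∀ y ∈ Y, f y = 0) → Ψ' f = 0 := by
          intro f hf
          rw [hΨ'def, ContinuousLinearMap.smul_apply, hΨ f hf, smul_zero]
        have hn' : ‖Ψ'‖ ≤ 1 := by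
          rw [hΨ'def]
          refine (ContinuousLinearMap.opNorm_smul_le _ _).trans ?_
          rw [norm_inv, Complex.norm_real, Real.norm_eq_abs,
            abs_of_nonneg (norm_nonneg Ψ), inv_mul_cancel₀ hn0]
        have hmem := goldstine Y Ψ' hker' hn'
        have hPmem : P Ψ' ∈ inclusionInDoubleDual ℂ X '' {x : X | x ∈ Y ∧ ‖x‖ ≤ 1} := by
          rw [← hB]; exact Set.mem_image_of_mem _ hmem
        obtain ⟨y, hy, hPy⟩ := hPmem
        refine ⟨((‖Ψ‖ : ℝ) : ℂ) • y, Y.smul_mem _ hy.1, ?_⟩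
        rw [map_smul, hPy, ← map_smul]
        congr 1
        rw [hΨ'def, smul_smul, mul_inv_cancel₀ hne, one_smul]
    · rintro _ ⟨x, hxY, rfl⟩
      refine ⟨inclusionInDoubleDual ℂ X x, ?_, hPfix x⟩
      intro f hf
      rw [dual_def]
      exact hf x hxY
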